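/- In the setting above, ‖s₀wŵρ‖² − ‖s₀wρ‖² = ‖ŵρ‖² − ‖ρ‖² for every ŵ ∈ Ŵ_{⊥φ}. -/

import Mathlib

open scoped RealInnerProductSpace BigOperators

noncomputable section

variable (V : Type) [NormedAddCommGroup V] [InnerProductSpace ℝ V] [FiniteDimensional ℝ V]

/-- A finite, reduced, crystallographic root system in a Euclidean space `V`,
with a chosen set of positive roots and the corresponding simple roots. -/
structure RootSystemData where
  /-- the rank -/
  l : ℕ
  /-- the simple roots -/
  simple : Fin l → V
  /-- the set of roots -/
  roots : Finset V
  /-- the set of positive roots -/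
  pos : Finset V
  pos_subset : pos ⊆ roots
  simple_mem_pos : ∀ i, simple i ∈ pos
  simple_indep : LinearIndependent ℝ simple
  span_roots : Submodule.span ℝ (roots : Set V) = ⊤
  root_ne_zero : ∀ α ∈ roots, α ≠ 0
  neg_mem : ∀ α ∈ roots, -α ∈ roots
  pos_iff : ∀ α ∈ roots, (α ∈ pos ↔ -α ∉ pos)
  pos_combo : ∀ α ∈ pos, ∃ c : Fin l → ℕ, α = ∑ i, (c i : ℝ) • simple i
  crystal : ∀ α ∈ roots, ∀ β ∈ roots, ∃ n : ℤ, 2 * ⟪β, α⟫ / ⟪α, α⟫ = (n : ℝ)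
  reflect_mem : ∀ α ∈ roots, ∀ β ∈ roots, β - (2 * ⟪β, α⟫ / ⟪α, α⟫) • α ∈ roots
  sub_mem : ∀ α ∈ roots, ∀ β ∈ roots, 0 < ⟪α, β⟫ → α ≠ β → α - β ∈ roots
  reduced : ∀ α ∈ roots, ∀ c : ℝ, c • α ∈ roots → c = 1 ∨ c = -1

namespace RootSystemData

open Classical

variable {V}

/-- The pairing `⟨λ, α∨⟩ = 2(λ|α)/(α|α)` of a vector with the coroot of `α`. -/
def pair (lam α : V) : ℝ := 2 * ⟪lam, α⟫ / ⟪α, α⟫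

/-- The orthogonal reflection in the hyperplane orthogonal to `α`. -/
def sRefl (α : V) : V ≃ₗᵢ[ℝ] V := Submodule.reflection ((ℝ ∙ α)ᗮ)

variable (R : RootSystemData V)

/-- Half the sum of the positive roots. -/
def ρ : V := (2 : ℝ)⁻¹ • ∑ φ ∈ R.pos, φ

/-- The (finite) Weyl group, generated by the simple reflections. -/
def W : Subgroup (V ≃ₗᵢ[ℝ] V) :=
  Subgroup.closure (Set.range fun i => sRefl (R.simple i))

/-- The length of a Weyl group element: the minimal length of a word in the
simple reflections expressing it. -/
def len (w : V ≃ₗᵢ[ℝ] V) : ℕ :=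
  sInf {k : ℕ | ∃ f : Fin k → Fin R.l,
    w = (List.ofFn fun j => sRefl (R.simple (f j))).prod}

/-- The inversion set `Φ_w = Φ₊ ∩ wΦ₋`. -/
def inversions (w : V ≃ₗᵢ[ℝ] V) : Finset V :=
  R.pos.filter fun x => -(w.symm x) ∈ R.pos

end RootSystemData

/-- An irreducible root system, together with its highest root `θ`. -/
structure IrredRootSystemData extends RootSystemData V where
  /-- the highest root -/
  θ : V
  θ_mem_pos : θ ∈ pos
  θ_highest : ∀ φ ∈ pos, ∃ c : Fin l → ℕ, θ - φ = ∑ i, (c i : ℝ) • simple i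
  θ_long : ∀ φ ∈ roots, ‖φ‖ ≤ ‖θ‖
  θ_dominant : ∀ i, 0 ≤ ⟪θ, simple i⟫
  irreducible : ∀ s : Finset V, s ⊆ roots →
      (∀ α ∈ s, ∀ β ∈ roots, β ∉ s → ⟪α, β⟫ = 0) → s = ∅ ∨ s = roots

namespace IrredRootSystemData

variable {V} (R : IrredRootSystemData V)

/-- The affine functional `L(φ) = 2(θ−φ|ρ)/(θ|θ)`. -/
def L (φ : V) : ℝ := 2 * ⟪R.θ - φ, R.toRootSystemData.ρ⟫ / ⟪R.θ, R.θ⟫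

/-- A root is long if it has the same length as the highest root. -/
def IsLong (φ : V) : Prop := ‖φ‖ = ‖R.θ‖

/-- The dual Coxeter number `g = ⟨ρ, θ∨⟩ + 1`. -/
def dualCox : ℝ := RootSystemData.pair R.toRootSystemData.ρ R.θ + 1

/-- The affine reflection `s₀(λ) = λ − (⟨λ,θ∨⟩ − g)θ` (scaled so that `s₀ρ = ρ + θ`). -/
def s0 (lam : V) : V := lam - (RootSystemData.pair lam R.θ - R.dualCox) • R.θ

end IrredRootSystemData

namespace IrredRootSystemData

variable {V} (R : IrredRootSystemData V)

/-- A simple reflection, viewed as an affine transformation. -/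
def affSimple (i : Fin R.l) : V ≃ᵃ[ℝ] V :=
  (RootSystemData.sRefl (R.simple i)).toLinearEquiv.toAffineEquiv

/-- The affine reflection `s₀ : λ ↦ s_θ λ + gθ` as an affine transformation. -/
def affS0 : V ≃ᵃ[ℝ] V :=
  ((RootSystemData.sRefl R.θ).toLinearEquiv.toAffineEquiv).trans
    (AffineEquiv.constVAdd ℝ V (R.dualCox • R.θ))

/-- The subgroup `Ŵ_{⊥φ}` of the affine Weyl group generated by those `s_i`
(`i = 0, …, l`, with `α₀ = −θ`) for which `α_i ⊥ φ`. -/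
def affWperp (φ : V) : Subgroup (V ≃ᵃ[ℝ] V) :=
  Subgroup.closure ({e | ∃ i, ⟪R.simple i, φ⟫ = 0 ∧ e = R.affSimple i} ∪
    {e | ⟪R.θ, φ⟫ = 0 ∧ e = R.affS0})

/-- The subgroup `W_{⊥φ}` generated by the simple reflections `s_i` (`i ≥ 1`)
with `α_i ⊥ φ`, viewed inside the affine Weyl group. -/
def finWperp (φ : V) : Subgroup (V ≃ᵃ[ℝ] V) :=
  Subgroup.closure {e | ∃ i, ⟪R.simple i, φ⟫ = 0 ∧ e = R.affSimple i}

/-- The length of an element of the affine Weyl group: the minimal length of a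
word in the generators `s₀, s₁, …, s_l`. -/
def affLen (wh : V ≃ᵃ[ℝ] V) : ℕ :=
  sInf {k : ℕ | ∃ f : Fin k → (V ≃ᵃ[ℝ] V),
    (∀ j, f j ∈ Set.range R.affSimple ∪ {R.affS0}) ∧ wh = (List.ofFn f).prod}

end IrredRootSystemData

/-- Reflection in the hyperplane orthogonal to `α` preserves the inner product
with any vector orthogonal to `α`. -/
lemma inner_sRefl_eq {V : Type} [NormedAddCommGroup V] [InnerProductSpace ℝ V]
    [FiniteDimensional ℝ V] (α φ x : V) (h : ⟪α, φ⟫ = 0) :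
    ⟪(RootSystemData.sRefl α) x, φ⟫ = ⟪x, φ⟫ := by
  have hφK : φ ∈ (ℝ ∙ α)ᗮ := by
    intro u hu
    obtain ⟨c, rfl⟩ := Submodule.mem_span_singleton.mp hu
    rw [real_inner_smul_left, h, mul_zero]
  have hz : ⟪x - ((ℝ ∙ α)ᗮ).starProjection x, φ⟫ = 0 :=
    Submodule.starProjection_inner_eq_zero x φ hφK
  rw [inner_sub_left] at hz
  rw [RootSystemData.sRefl, Submodule.reflection_apply, two_smul, inner_sub_left, inner_add_left]
  linarith

/-- In the setting of the minimal element `w` with `wφ = θ` for a positive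
long root `φ`, one has `‖s₀wŵρ‖² − ‖s₀wρ‖² = ‖ŵρ‖² − ‖ρ‖²` for every
`ŵ ∈ Ŵ_{⊥φ}`. -/
theorem norm_sq_s0_w_what_rho (R : IrredRootSystemData V) (φ : V)
    (hφ : φ ∈ R.pos) (hlong : R.IsLong φ)
    (w : V ≃ₗᵢ[ℝ] V) (hwW : w ∈ R.W) (hwφ : w φ = R.θ)
    (hlen : (R.len w : ℝ) = R.L φ)
    (what : V ≃ᵃ[ℝ] V) (hwhat : what ∈ R.affWperp φ) :
    ‖R.s0 (w (what R.ρ))‖ ^ 2 - ‖R.s0 (w R.ρ)‖ ^ 2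
      = ‖what R.ρ‖ ^ 2 - ‖R.ρ‖ ^ 2 := by
  -- every element of `Ŵ_{⊥φ}` preserves the inner product with `φ`
  have hperp : ∀ x : V, ⟪what x, φ⟫ = ⟪x, φ⟫ := by
    refine Subgroup.closure_induction ?_ (fun x => rfl) ?_ ?_ hwhat
    · rintro e (⟨i, hi, rfl⟩ | ⟨hθφ, rfl⟩)
      · intro x
        exact inner_sRefl_eq (R.simple i) φ x hi
      · intro x
        show ⟪R.dualCox • R.θ + (RootSystemData.sRefl R.θ) x, φ⟫ = ⟪x, φ⟫
        rw [inner_add_left, real_inner_smul_left, hθφ, mul_zero, zero_add]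
        exact inner_sRefl_eq R.θ φ x hθφ
    · intro a b _ _ ha hb x
      have : (a * b) x = a (b x) := rfl
      rw [this, ha, hb]
    · intro a _ ha x
      have : ⟪a (a⁻¹ x), φ⟫ = ⟪a⁻¹ x, φ⟫ := ha _
      rw [show a (a⁻¹ x) = x from a.apply_symm_apply x] at this
      exact this.symm
  have key : ∀ μ : V, ⟪w μ, R.θ⟫ = ⟪μ, φ⟫ := by
    intro μ
    rw [← hwφ, LinearIsometryEquiv.inner_map_map]
  set a := ⟪R.ρ, φ⟫ with ha
  set c : ℝ := 2 * a / ⟪R.θ, R.θ⟫ - R.dualCox with hc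
  have hs : ∀ μ : V, ⟪μ, φ⟫ = a →
      ‖R.s0 (w μ)‖ ^ 2 = ‖μ‖ ^ 2 - 2 * (c * a) + c ^ 2 * ‖R.θ‖ ^ 2 := by
    intro μ hμ
    have h1 : R.s0 (w μ) = w μ - c • R.θ := by
      rw [IrredRootSystemData.s0, RootSystemData.pair, key, hμ]
    rw [h1, norm_sub_sq_real, real_inner_smul_right, key, hμ,
      LinearIsometryEquiv.norm_map, norm_smul, mul_pow, Real.norm_eq_abs, sq_abs]
  rw [hs (what R.ρ) (hperp R.ρ), hs R.ρ rfl]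
  ring
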